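/- The dreaded torus quiver is mutation-periodic: mutating the dreaded torus quiver at any of its 4 vertices yields a quiver isomorphic to the dreaded torus quiver. -/

import Mathlib

/-- Quiver mutation at vertex `k` on a skew-symmetric integer matrix. -/
def mutate {n : ℕ} (B : Matrix (Fin n) (Fin n) ℤ) (k : Fin n) : Matrix (Fin n) (Fin n) ℤ :=
  fun i j => if i = k ∨ j = k then -B i j
    else B i j + (|B i k| * B k j + B i k * |B k j|) / 2

/-- The quiver of `B` (edge `i → j` iff `B i j > 0`) has a directed cycle. -/
def HasCycle {n : ℕ} (B : Matrix (Fin n) (Fin n) ℤ) : Prop :=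
  ∃ (ℓ : ℕ) (p : ℕ → Fin n), 0 < ℓ ∧ p ℓ = p 0 ∧ ∀ i < ℓ, 0 < B (p i) (p (i + 1))

/-- The quiver of `B` is acyclic. -/
def Acyclic {n : ℕ} (B : Matrix (Fin n) (Fin n) ℤ) : Prop := ¬ HasCycle B

/-- `B'` is obtained from `B` by a finite sequence of mutations. -/
def MutEquiv {n : ℕ} (B B' : Matrix (Fin n) (Fin n) ℤ) : Prop :=
  ∃ L : List (Fin n), B' = L.foldl mutate B

/-- The dreaded torus quiver. -/
def dreadedTorus : Matrix (Fin 4) (Fin 4) ℤ :=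
  !![0, 1, 1, -1; -1, 0, -1, 2; -1, 1, 0, -1; 1, -2, 1, 0]

def mkPerm (f g : Fin 4 → Fin 4) (h1 : ∀ x, g (f x) = x) (h2 : ∀ x, f (g x) = x) :
    Equiv.Perm (Fin 4) := ⟨f, g, h1, h2⟩

theorem dreadedTorus_mutation_periodic (k : Fin 4) :
    ∃ σ : Equiv.Perm (Fin 4), ∀ i j, mutate dreadedTorus k i j = dreadedTorus (σ i) (σ j) := by
  fin_cases k
  · exact ⟨mkPerm ![2,0,3,1] ![1,3,0,2] (by decide) (by decide), by unfold mutate; decide⟩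
  · exact ⟨mkPerm ![0,3,2,1] ![0,3,2,1] (by decide) (by decide), by unfold mutate; decide⟩
  · exact ⟨mkPerm ![1,3,0,2] ![2,0,3,1] (by decide) (by decide), by unfold mutate; decide⟩
  · exact ⟨mkPerm ![0,3,2,1] ![0,3,2,1] (by decide) (by decide), by unfold mutate; decide⟩
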